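/- arXiv:1411.5079 — 3 statements merged into one kernel-verified Lean document; each statement's English description precedes it below -/
import Mathlib

section
/- If X is a maximal operator space and Y a closed subspace of X, then the quotient operator space X/Y is maximal: Max(X/Y) is completely isometric to Max(X)/Y. -/
noncomputable section

namespace OSP

/-- A sequence of matrix norms (as bare functions) on a type `X`. -/
abbrev MatNorms (X : Type) : Type := ∀ n : ℕ, Matrix (Fin n) (Fin n) X → ℝ

/-- The operator norm of a scalar matrix, viewed as an operator on Euclidean space. -/
def scNorm {m : Type} [Fintype m] [DecidableEq m] (A : Matrix m m ℂ) : ℝ :=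
  ‖Matrix.toEuclideanCLM (𝕜 := ℂ) (n := m) A‖

/-- The two-sided scalar multiplication `a · x · b` of a matrix over `X` by scalar matrices. -/
def smulMat {X : Type} [AddCommGroup X] [Module ℂ X] {n : ℕ}
    (a : Matrix (Fin n) (Fin n) ℂ) (x : Matrix (Fin n) (Fin n) X)
    (b : Matrix (Fin n) (Fin n) ℂ) : Matrix (Fin n) (Fin n) X :=
  Matrix.of fun i j => ∑ k, ∑ l, (a i k * b l j) • x k l

/-- An (admissible, abstract) operator space structure on a normed space `X`:
a sequence of matrix norms satisfying Ruan's axioms whose first level is the norm of `X`. -/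
structure OSS (X : Type) [NormedAddCommGroup X] [NormedSpace ℂ X] where
  N : MatNorms X
  nonneg : ∀ n x, 0 ≤ N n x
  add_le : ∀ n (x y : Matrix (Fin n) (Fin n) X), N n (x + y) ≤ N n x + N n y
  smul_eq : ∀ n (c : ℂ) (x : Matrix (Fin n) (Fin n) X), N n (c • x) = ‖c‖ * N n x
  eq_zero : ∀ n (x : Matrix (Fin n) (Fin n) X), N n x = 0 → x = 0
  level_one : ∀ x : X, N 1 (Matrix.of fun _ _ => x) = ‖x‖
  ruan_mul : ∀ n (a b : Matrix (Fin n) (Fin n) ℂ) (x : Matrix (Fin n) (Fin n) X),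
    N n (smulMat a x b) ≤ scNorm a * N n x * scNorm b
  ruan_block : ∀ (n m : ℕ) (x : Matrix (Fin n) (Fin n) X) (y : Matrix (Fin m) (Fin m) X),
    N (n + m) ((Matrix.fromBlocks x 0 0 y).submatrix finSumFinEquiv.symm finSumFinEquiv.symm)
      = max (N n x) (N m y)

/-- A bundled operator space. -/
structure OpSpace where
  carrier : Type
  [grp : NormedAddCommGroup carrier]
  [mod : NormedSpace ℂ carrier]
  str : OSS carrier

attribute [instance] OpSpace.grp OpSpace.mod

/-- `f` amplifies with bound `C` at all matrix levels. -/
def ampBound {X Y : Type} (NX : MatNorms X) (NY : MatNorms Y) (f : X → Y) (C : ℝ) : Prop :=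
  ∀ n (x : Matrix (Fin n) (Fin n) X), NY n (x.map f) ≤ C * NX n x

/-- `f` is completely bounded. -/
def CompletelyBounded {X Y : Type} (NX : MatNorms X) (NY : MatNorms Y) (f : X → Y) : Prop :=
  ∃ C, 0 ≤ C ∧ ampBound NX NY f C

/-- The completely bounded norm of `f`. -/
def cbNorm {X Y : Type} (NX : MatNorms X) (NY : MatNorms Y) (f : X → Y) : ℝ :=
  sInf {C | 0 ≤ C ∧ ampBound NX NY f C}

/-- The matrix norms of the minimal operator space structure `Min X`. -/
def minN (X : Type) [NormedAddCommGroup X] [NormedSpace ℂ X] : MatNorms X :=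
  fun n x => sSup {r | ∃ f : X →L[ℂ] ℂ, ‖f‖ ≤ 1 ∧ r = scNorm (x.map ⇑f)}

/-- The matrix norms of the maximal operator space structure `Max X`. -/
def maxN (X : Type) [NormedAddCommGroup X] [NormedSpace ℂ X] : MatNorms X :=
  fun n x => sSup {r | ∃ (Z : OpSpace) (u : X →L[ℂ] Z.carrier), ‖u‖ ≤ 1 ∧ r = Z.str.N n (x.map ⇑u)}

/-- The inherited (subspace) matrix norms on a submodule. -/
def subN {X : Type} [NormedAddCommGroup X] [NormedSpace ℂ X]
    (NX : MatNorms X) (Y : Submodule ℂ X) : MatNorms Y :=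
  fun n x => NX n (x.map ⇑Y.subtype)

/-- The quotient matrix norms on `X ⧸ Y`. -/
def quotN {X : Type} [NormedAddCommGroup X] [NormedSpace ℂ X]
    (NX : MatNorms X) (Y : Submodule ℂ X) : MatNorms (X ⧸ Y) :=
  fun n z => sInf {r | ∃ x : Matrix (Fin n) (Fin n) X, x.map ⇑Y.mkQ = z ∧ r = NX n x}

/-- The canonical operator space matrix norms on `M_d(ℂ)`. -/
def MnN (d : ℕ) : MatNorms (Matrix (Fin d) (Fin d) ℂ) :=
  fun n x => scNorm (Matrix.of fun p q : Fin n × Fin d => x p.1 q.1 p.2 q.2)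

/-- The dual matrix norms on `X* = X →L[ℂ] ℂ`, via `M_n(X*) = CB(X, M_n)`. -/
def dualN {X : Type} [NormedAddCommGroup X] [NormedSpace ℂ X] (NX : MatNorms X) :
    MatNorms (X →L[ℂ] ℂ) :=
  fun n F => cbNorm NX (MnN n) (fun x => Matrix.of fun i j => F i j x)

/-- The annihilator `Y⊥` of a subspace `Y ⊆ X` inside the dual `X*`. -/
def ann {X : Type} [NormedAddCommGroup X] [NormedSpace ℂ X] (Y : Submodule ℂ X) :
    Submodule ℂ (X →L[ℂ] ℂ) where
  carrier := {f | ∀ y ∈ Y, f y = 0}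
  add_mem' := by intro f g hf hg y hy; simp [hf y hy, hg y hy]
  zero_mem' := by intro y hy; simp
  smul_mem' := by intro c f hf y hy; simp [hf y hy]

/-- A complete quotient map: every amplification maps the open unit ball onto the open unit ball. -/
def CompleteQuotientMap {X Z : Type} (NX : MatNorms X) (NZ : MatNorms Z) (f : X → Z) : Prop :=
  ∀ n, (fun x : Matrix (Fin n) (Fin n) X => x.map f) '' {x | NX n x < 1} = {z | NZ n z < 1}

end OSP
namespace OSP
open Matrix

variable {k : Type} [Fintype k] [DecidableEq k]

/-- Euclidean vector from a plain function. -/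
def ev (v : k → ℂ) : EuclideanSpace ℂ k := (WithLp.equiv 2 (k → ℂ)).symm v

lemma ev_surjective : Function.Surjective (ev (k := k)) :=
  (WithLp.equiv 2 (k → ℂ)).symm.surjective

lemma clm_ev (A : Matrix k k ℂ) (v : k → ℂ) :
    Matrix.toEuclideanCLM (𝕜 := ℂ) A (ev v) = ev (A *ᵥ v) := by
  rfl

/-- Sum of squares of the entries. -/
def nsq (v : k → ℂ) : ℝ := ∑ j, ‖v j‖ ^ 2

lemma nsq_nonneg (v : k → ℂ) : 0 ≤ nsq v :=
  Finset.sum_nonneg fun _ _ => sq_nonneg _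

lemma ev_norm (v : k → ℂ) : ‖ev v‖ = Real.sqrt (nsq v) := by
  rw [EuclideanSpace.norm_eq]; rfl

lemma sq_le_nsq (v : k → ℂ) (j : k) : ‖v j‖ ^ 2 ≤ nsq v :=
  Finset.single_le_sum (fun i _ => sq_nonneg (‖v i‖)) (Finset.mem_univ j)

lemma scNorm_nonneg' (A : Matrix k k ℂ) : 0 ≤ scNorm A := norm_nonneg _

lemma scNorm_zero : scNorm (0 : Matrix k k ℂ) = 0 := by
  rw [scNorm, _root_.map_zero, norm_zero]

lemma scNorm_add_le (A B : Matrix k k ℂ) : scNorm (A + B) ≤ scNorm A + scNorm B := by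
  rw [scNorm, _root_.map_add]; exact norm_add_le _ _

set_option synthInstance.maxHeartbeats 1000000 in
lemma scNorm_smul (c : ℂ) (A : Matrix k k ℂ) : scNorm (c • A) = ‖c‖ * scNorm A := by
  rw [scNorm, _root_.map_smul]
  exact norm_smul c (Matrix.toEuclideanCLM (𝕜 := ℂ) (n := k) A)

lemma scNorm_eq_zero (A : Matrix k k ℂ) (h : scNorm A = 0) : A = 0 := by
  rw [scNorm, norm_eq_zero] at h
  exact (map_eq_zero_iff _ (Matrix.toEuclideanCLM (𝕜 := ℂ) (n := k)).injective).mp h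

lemma scNorm_mul_le (A B : Matrix k k ℂ) : scNorm (A * B) ≤ scNorm A * scNorm B := by
  rw [scNorm, _root_.map_mul]; exact norm_mul_le _ _

lemma scNorm_one_le : scNorm (1 : Matrix k k ℂ) ≤ 1 := by
  rw [scNorm, _root_.map_one, ContinuousLinearMap.one_def]
  exact ContinuousLinearMap.norm_id_le

lemma scNorm_mulVec_le (A : Matrix k k ℂ) (v : k → ℂ) :
    ‖ev (A *ᵥ v)‖ ≤ scNorm A * ‖ev v‖ := by
  rw [← clm_ev]; exact (Matrix.toEuclideanCLM (𝕜 := ℂ) A).le_opNorm _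

lemma nsq_mulVec_le (A : Matrix k k ℂ) (v : k → ℂ) :
    nsq (A *ᵥ v) ≤ scNorm A ^ 2 * nsq v := by
  have h := scNorm_mulVec_le A v
  have h2 := pow_le_pow_left₀ (norm_nonneg _) h 2
  rw [ev_norm, ev_norm, Real.sq_sqrt (nsq_nonneg _), mul_pow,
    Real.sq_sqrt (nsq_nonneg _)] at h2
  exact h2

lemma scNorm_le_bound (A : Matrix k k ℂ) {C : ℝ} (hC : 0 ≤ C)
    (h : ∀ v : k → ℂ, nsq (A *ᵥ v) ≤ C ^ 2 * nsq v) : scNorm A ≤ C := by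
  apply ContinuousLinearMap.opNorm_le_bound _ hC
  intro x
  obtain ⟨v, rfl⟩ := ev_surjective x
  rw [clm_ev, ev_norm, ev_norm]
  calc Real.sqrt (nsq (A *ᵥ v)) ≤ Real.sqrt (C ^ 2 * nsq v) := Real.sqrt_le_sqrt (h v)
    _ = C * Real.sqrt (nsq v) := by
        rw [Real.sqrt_mul (sq_nonneg C), Real.sqrt_sq hC]

lemma scNorm_std_le (i j : k) (c : ℂ) : scNorm (Matrix.single i j c) ≤ ‖c‖ := by
  apply scNorm_le_bound _ (norm_nonneg c)
  intro v
  rw [Matrix.single_mulVec]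
  have hn : nsq (Function.update (0 : k → ℂ) i (c * v j)) = ‖c * v j‖ ^ 2 := by
    rw [nsq]
    rw [Finset.sum_eq_single i]
    · simp
    · intro b _ hb; simp [Function.update_apply, hb]
    · simp
  rw [hn, norm_mul, mul_pow]
  exact mul_le_mul_of_nonneg_left (sq_le_nsq v j) (sq_nonneg _)

lemma scNorm_one_by_one (A : Matrix (Fin 1) (Fin 1) ℂ) : scNorm A = ‖A 0 0‖ := by
  apply le_antisymm
  · have hA : A = Matrix.single 0 0 (A 0 0) := by
      ext i j
      fin_cases i; fin_cases j; simp [Matrix.single]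
    rw [hA]; exact scNorm_std_le _ _ _
  · have h := scNorm_mulVec_le A (fun _ => 1)
    have h1 : (A *ᵥ fun _ => (1:ℂ)) = fun _ => A 0 0 := by
      ext p
      fin_cases p
      simp [Matrix.mulVec, dotProduct]
    have h2 : ∀ c : ℂ, ‖ev (fun _ : Fin 1 => c)‖ = ‖c‖ := by
      intro c
      rw [ev_norm, nsq, Fin.sum_univ_one, Real.sqrt_sq (norm_nonneg c)]
    rw [h1, h2, h2] at h
    simpa using h

end OSP
namespace OSP
open Matrix

/-! ### Block norm lemma for `scNorm` -/

lemma block_mulVec {n m : ℕ} (A : Matrix (Fin n) (Fin n) ℂ) (B : Matrix (Fin m) (Fin m) ℂ)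
    (v : Fin (n + m) → ℂ) :
    ((Matrix.fromBlocks A 0 0 B).submatrix ⇑finSumFinEquiv.symm ⇑finSumFinEquiv.symm) *ᵥ v
      = (Sum.elim (A *ᵥ fun i => v (finSumFinEquiv (Sum.inl i)))
          (B *ᵥ fun i => v (finSumFinEquiv (Sum.inr i)))) ∘ ⇑finSumFinEquiv.symm := by
  rw [Matrix.submatrix_mulVec_equiv, Matrix.fromBlocks_mulVec]
  simp only [Equiv.symm_symm, Matrix.zero_mulVec, add_zero, zero_add]
  rfl

lemma sum_split {n m : ℕ} (g : Fin (n + m) → ℝ) :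
    ∑ p, g p = ∑ i : Fin n, g (finSumFinEquiv (Sum.inl i))
      + ∑ j : Fin m, g (finSumFinEquiv (Sum.inr j)) := by
  rw [← Equiv.sum_comp finSumFinEquiv g, Fintype.sum_sum_type]

lemma nsq_elim {n m : ℕ} (u₁ : Fin n → ℂ) (u₂ : Fin m → ℂ) :
    nsq (Sum.elim u₁ u₂ ∘ ⇑finSumFinEquiv.symm) = nsq u₁ + nsq u₂ := by
  rw [nsq, sum_split (fun p => ‖(Sum.elim u₁ u₂ ∘ ⇑finSumFinEquiv.symm) p‖ ^ 2)]
  simp [nsq]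

lemma nsq_zero (m : ℕ) : nsq (0 : Fin m → ℂ) = 0 := by simp [nsq]

lemma scNorm_block {n m : ℕ} (A : Matrix (Fin n) (Fin n) ℂ) (B : Matrix (Fin m) (Fin m) ℂ) :
    scNorm ((Matrix.fromBlocks A 0 0 B).submatrix ⇑finSumFinEquiv.symm ⇑finSumFinEquiv.symm)
      = max (scNorm A) (scNorm B) := by
  set M := (Matrix.fromBlocks A 0 0 B).submatrix ⇑finSumFinEquiv.symm ⇑finSumFinEquiv.symm with hM
  apply le_antisymm
  · apply scNorm_le_bound _ (le_max_of_le_left (scNorm_nonneg' A))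
    intro v
    rw [hM, block_mulVec, nsq_elim]
    have hv : nsq v = nsq (fun i => v (finSumFinEquiv (Sum.inl i)))
        + nsq (fun j => v (finSumFinEquiv (Sum.inr j))) := by
      rw [nsq, sum_split (fun p => ‖v p‖ ^ 2)]; rfl
    rw [hv]
    have hA := nsq_mulVec_le A (fun i => v (finSumFinEquiv (Sum.inl i)))
    have hB := nsq_mulVec_le B (fun j => v (finSumFinEquiv (Sum.inr j)))
    have h1 : scNorm A ^ 2 ≤ (max (scNorm A) (scNorm B)) ^ 2 :=
      pow_le_pow_left₀ (scNorm_nonneg' A) (le_max_left _ _) 2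
    have h2 : scNorm B ^ 2 ≤ (max (scNorm A) (scNorm B)) ^ 2 :=
      pow_le_pow_left₀ (scNorm_nonneg' B) (le_max_right _ _) 2
    nlinarith [nsq_nonneg (fun i => v (finSumFinEquiv (Sum.inl i))),
      nsq_nonneg (fun j => v (finSumFinEquiv (Sum.inr j)))]
  · apply max_le
    · apply scNorm_le_bound _ (scNorm_nonneg' M)
      intro v
      set w : Fin (n + m) → ℂ := Sum.elim v 0 ∘ ⇑finSumFinEquiv.symm with hw
      have hf₁ : (fun i => w (finSumFinEquiv (Sum.inl i))) = v := by
        funext i; simp [hw]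
      have hf₂ : (fun j => w (finSumFinEquiv (Sum.inr j))) = (0 : Fin m → ℂ) := by
        funext j; simp [hw]
      have h := nsq_mulVec_le M w
      have hMw : M *ᵥ w = Sum.elim (A *ᵥ v) 0 ∘ ⇑finSumFinEquiv.symm := by
        rw [hM, block_mulVec, hf₁, hf₂, Matrix.mulVec_zero]
      rw [hMw, hw, nsq_elim, nsq_elim, nsq_zero, add_zero, add_zero] at h
      exact h
    · apply scNorm_le_bound _ (scNorm_nonneg' M)
      intro v
      set w : Fin (n + m) → ℂ := Sum.elim (0 : Fin n → ℂ) v ∘ ⇑finSumFinEquiv.symm with hw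
      have hf₁ : (fun i => w (finSumFinEquiv (Sum.inl i))) = (0 : Fin n → ℂ) := by
        funext i; simp [hw]
      have hf₂ : (fun j => w (finSumFinEquiv (Sum.inr j))) = v := by
        funext j; simp [hw]
      have h := nsq_mulVec_le M w
      have hMw : M *ᵥ w = Sum.elim (0 : Fin n → ℂ) (B *ᵥ v) ∘ ⇑finSumFinEquiv.symm := by
        rw [hM, block_mulVec, hf₁, hf₂, Matrix.mulVec_zero]
      rw [hMw, hw, nsq_elim, nsq_elim, nsq_zero, zero_add, zero_add] at h
      exact h

/-! ### General lemmas about operator space structures -/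

variable {X : Type} [NormedAddCommGroup X] [NormedSpace ℂ X]

lemma oss_zero (S : OSS X) (n : ℕ) : S.N n 0 = 0 := by
  have h := S.smul_eq n 0 0
  simpa using h

/-- The index `0` inside `Fin (1 + m)`. -/
def i01 (m : ℕ) : Fin (1 + m) := finSumFinEquiv (Sum.inl (0 : Fin 1))

lemma block_std00 (m : ℕ) (v : X) :
    ((Matrix.fromBlocks (Matrix.of fun _ _ : Fin 1 => v) 0 0
        (0 : Matrix (Fin m) (Fin m) X)).submatrix ⇑finSumFinEquiv.symm ⇑finSumFinEquiv.symm)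
      = Matrix.single (i01 m) (i01 m) v := by
  ext p q
  obtain ⟨s, rfl⟩ := finSumFinEquiv.surjective p
  obtain ⟨t, rfl⟩ := finSumFinEquiv.surjective q
  rw [Matrix.submatrix_apply, Equiv.symm_apply_apply, Equiv.symm_apply_apply]
  have hst : Matrix.single (i01 m) (i01 m) v (finSumFinEquiv s) (finSumFinEquiv t)
      = if Sum.inl 0 = s ∧ Sum.inl 0 = t then v else 0 := by
    simp only [Matrix.single, Matrix.of_apply, i01, Equiv.apply_eq_iff_eq]
  rw [hst]
  rcases s with i | i <;> rcases t with j | j <;>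
    simp [Fin.fin_one_eq_zero]

lemma oss_std00 (S : OSS X) (m : ℕ) (v : X) :
    S.N (1 + m) (Matrix.single (i01 m) (i01 m) v) = ‖v‖ := by
  have hb := S.ruan_block 1 m (Matrix.of fun _ _ => v) 0
  rw [block_std00, S.level_one, oss_zero, max_eq_left (norm_nonneg v)] at hb
  exact hb

lemma smulMat_std_std {n : ℕ} (p q i j : Fin n) (x : Matrix (Fin n) (Fin n) X) :
    smulMat (Matrix.single p i 1) x (Matrix.single j q 1)
      = Matrix.single p q (x i j) := by
  ext r s
  simp only [smulMat, Matrix.of_apply, Matrix.single]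
  rw [Finset.sum_eq_single i]
  · rw [Finset.sum_eq_single j]
    · by_cases h1 : p = r <;> by_cases h2 : q = s <;> simp [h1, h2]
    · intro b _ hb; simp [Ne.symm hb]
    · simp
  · intro b _ hb
    simp [Ne.symm hb]
  · simp

lemma mul3_le {a b c : ℝ} (ha0 : 0 ≤ a) (hc0 : 0 ≤ c) (ha : a ≤ 1) (hc : c ≤ 1)
    (hb : 0 ≤ b) : a * b * c ≤ b := by
  calc a * b * c ≤ a * b * 1 := mul_le_mul_of_nonneg_left hc (mul_nonneg ha0 hb)
    _ = a * b := mul_one _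
    _ ≤ 1 * b := mul_le_mul_of_nonneg_right ha hb
    _ = b := one_mul _

lemma oss_std_le (S : OSS X) {n : ℕ} (i j : Fin n) (v : X) :
    S.N n (Matrix.single i j v) ≤ ‖v‖ := by
  have hn : n ≠ 0 := fun h => (h ▸ i).elim0
  obtain ⟨m, rfl⟩ : ∃ m, n = 1 + m := ⟨n - 1, by omega⟩
  have key := smulMat_std_std i j (i01 m) (i01 m)
    (Matrix.single (i01 m) (i01 m) v)
  rw [Matrix.single_apply_same] at key
  rw [← key]
  have h1 : scNorm (Matrix.single i (i01 m) (1:ℂ)) ≤ 1 := by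
    simpa using scNorm_std_le i (i01 m) (1:ℂ)
  have h2 : scNorm (Matrix.single (i01 m) j (1:ℂ)) ≤ 1 := by
    simpa using scNorm_std_le (i01 m) j (1:ℂ)
  calc S.N (1 + m) _
      ≤ scNorm (Matrix.single i (i01 m) (1:ℂ))
        * S.N (1 + m) (Matrix.single (i01 m) (i01 m) v)
        * scNorm (Matrix.single (i01 m) j (1:ℂ)) := S.ruan_mul _ _ _ _
    _ ≤ S.N (1 + m) (Matrix.single (i01 m) (i01 m) v) :=
        mul3_le (scNorm_nonneg' _) (scNorm_nonneg' _) h1 h2 (S.nonneg _ _)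
    _ = ‖v‖ := oss_std00 S m v

lemma oss_entry_le (S : OSS X) {n : ℕ} (x : Matrix (Fin n) (Fin n) X) (i j : Fin n) :
    ‖x i j‖ ≤ S.N n x := by
  have hn : n ≠ 0 := fun h => (h ▸ i).elim0
  obtain ⟨m, rfl⟩ : ∃ m, n = 1 + m := ⟨n - 1, by omega⟩
  have key := smulMat_std_std (i01 m) (i01 m) i j x
  have h := S.ruan_mul (1 + m) (Matrix.single (i01 m) i 1)
    (Matrix.single j (i01 m) 1) x
  rw [key, oss_std00] at h
  have h1 : scNorm (Matrix.single (i01 m) i (1:ℂ)) ≤ 1 := by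
    simpa using scNorm_std_le (i01 m) i (1:ℂ)
  have h2 : scNorm (Matrix.single j (i01 m) (1:ℂ)) ≤ 1 := by
    simpa using scNorm_std_le j (i01 m) (1:ℂ)
  exact h.trans (mul3_le (scNorm_nonneg' _) (scNorm_nonneg' _) h1 h2 (S.nonneg _ _))

lemma oss_le_sum (S : OSS X) {n : ℕ} (x : Matrix (Fin n) (Fin n) X) :
    S.N n x ≤ ∑ i, ∑ j, ‖x i j‖ := by
  conv_lhs => rw [Matrix.matrix_eq_sum_single x]
  refine le_trans (Finset.le_sum_of_subadditive (S.N n) (oss_zero S n).le (S.add_le n) _ _) ?_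
  refine Finset.sum_le_sum fun i _ => ?_
  refine le_trans (Finset.le_sum_of_subadditive (S.N n) (oss_zero S n).le (S.add_le n) _ _) ?_
  exact Finset.sum_le_sum fun j _ => oss_std_le S i j _

/-! ### The operator space structure on `ℂ` -/

lemma smulMat_eq_mul {n : ℕ} (a x b : Matrix (Fin n) (Fin n) ℂ) :
    smulMat a x b = a * x * b := by
  ext p q
  simp only [smulMat, Matrix.of_apply, Matrix.mul_apply, smul_eq_mul]
  rw [Finset.sum_comm]
  refine Finset.sum_congr rfl fun l _ => ?_
  rw [Finset.sum_mul]
  refine Finset.sum_congr rfl fun k _ => ?_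
  ring

/-- The canonical operator space structure on `ℂ`. -/
def Cop : OSS ℂ where
  N _ x := scNorm x
  nonneg _ x := scNorm_nonneg' x
  add_le _ x y := scNorm_add_le x y
  smul_eq _ c x := scNorm_smul c x
  eq_zero _ x h := scNorm_eq_zero x h
  level_one x := by
    show scNorm (Matrix.of fun _ _ => x) = ‖x‖
    rw [scNorm_one_by_one]; rfl
  ruan_mul n a b x := by
    rw [smulMat_eq_mul]
    calc scNorm (a * x * b) ≤ scNorm (a * x) * scNorm b := scNorm_mul_le _ _
      _ ≤ scNorm a * scNorm x * scNorm b :=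
          mul_le_mul_of_nonneg_right (scNorm_mul_le a x) (scNorm_nonneg' b)
  ruan_block _ _ x y := scNorm_block x y

/-- The operator space `ℂ`. -/
abbrev Csp : OpSpace := { carrier := ℂ, str := Cop }

end OSP
namespace OSP
open Matrix

variable {X : Type} [NormedAddCommGroup X] [NormedSpace ℂ X]

/-! ### Basic facts about `maxN` -/

lemma maxSet_zero_mem (n : ℕ) (x : Matrix (Fin n) (Fin n) X) :
    (0:ℝ) ∈ {r | ∃ (Z : OpSpace) (u : X →L[ℂ] Z.carrier), ‖u‖ ≤ 1 ∧ r = Z.str.N n (x.map ⇑u)} := by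
  refine ⟨Csp, 0, by simp, ?_⟩
  have h : x.map ⇑(0 : X →L[ℂ] ℂ) = 0 := by
    ext i j; simp
  rw [h, oss_zero]

lemma maxSet_bddAbove (n : ℕ) (x : Matrix (Fin n) (Fin n) X) :
    BddAbove {r | ∃ (Z : OpSpace) (u : X →L[ℂ] Z.carrier), ‖u‖ ≤ 1 ∧ r = Z.str.N n (x.map ⇑u)} := by
  refine ⟨∑ i, ∑ j, ‖x i j‖, ?_⟩
  rintro r ⟨Z, u, hu, rfl⟩
  calc Z.str.N n (x.map ⇑u) ≤ ∑ i, ∑ j, ‖(x.map ⇑u) i j‖ := oss_le_sum _ _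
    _ ≤ ∑ i, ∑ j, ‖x i j‖ := by
        refine Finset.sum_le_sum fun i _ => Finset.sum_le_sum fun j _ => ?_
        calc ‖(x.map ⇑u) i j‖ = ‖u (x i j)‖ := rfl
          _ ≤ ‖u‖ * ‖x i j‖ := u.le_opNorm _
          _ ≤ 1 * ‖x i j‖ := mul_le_mul_of_nonneg_right hu (norm_nonneg _)
          _ = ‖x i j‖ := one_mul _

lemma le_maxN (n : ℕ) (x : Matrix (Fin n) (Fin n) X) (Z : OpSpace)
    (u : X →L[ℂ] Z.carrier) (hu : ‖u‖ ≤ 1) :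
    Z.str.N n (x.map ⇑u) ≤ maxN X n x :=
  le_csSup (maxSet_bddAbove n x) ⟨Z, u, hu, rfl⟩

lemma maxN_le (n : ℕ) (x : Matrix (Fin n) (Fin n) X) {C : ℝ}
    (h : ∀ (Z : OpSpace) (u : X →L[ℂ] Z.carrier), ‖u‖ ≤ 1 → Z.str.N n (x.map ⇑u) ≤ C) :
    maxN X n x ≤ C := by
  refine csSup_le ⟨0, maxSet_zero_mem n x⟩ ?_
  rintro b ⟨Z, u, hu, rfl⟩
  exact h Z u hu

lemma maxN_nonneg (n : ℕ) (x : Matrix (Fin n) (Fin n) X) : 0 ≤ maxN X n x :=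
  le_csSup (maxSet_bddAbove n x) (maxSet_zero_mem n x)

lemma maxN_zero (n : ℕ) : maxN X n (0 : Matrix (Fin n) (Fin n) X) = 0 := by
  refine le_antisymm (maxN_le n 0 ?_) (maxN_nonneg n 0)
  intro Z u hu
  have h : (0 : Matrix (Fin n) (Fin n) X).map ⇑u = 0 := by
    ext i j; simp
  rw [h, oss_zero]

lemma maxN_add_le (n : ℕ) (x y : Matrix (Fin n) (Fin n) X) :
    maxN X n (x + y) ≤ maxN X n x + maxN X n y := by
  refine maxN_le n _ fun Z u hu => ?_
  have h : (x + y).map ⇑u = x.map ⇑u + y.map ⇑u := by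
    ext i j; simp
  rw [h]
  exact (Z.str.add_le n _ _).trans (add_le_add (le_maxN n x Z u hu) (le_maxN n y Z u hu))

lemma maxN_smul_le (n : ℕ) (c : ℂ) (x : Matrix (Fin n) (Fin n) X) :
    maxN X n (c • x) ≤ ‖c‖ * maxN X n x := by
  refine maxN_le n _ fun Z u hu => ?_
  have h : (c • x).map ⇑u = c • (x.map ⇑u) := by
    ext i j; simp
  rw [h, Z.str.smul_eq]
  exact mul_le_mul_of_nonneg_left (le_maxN n x Z u hu) (norm_nonneg c)

lemma maxN_smul (n : ℕ) (c : ℂ) (x : Matrix (Fin n) (Fin n) X) :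
    maxN X n (c • x) = ‖c‖ * maxN X n x := by
  rcases eq_or_ne c 0 with rfl | hc
  · simp [maxN_zero]
  · refine le_antisymm (maxN_smul_le n c x) ?_
    have h1 : maxN X n x ≤ ‖c⁻¹‖ * maxN X n (c • x) := by
      have := maxN_smul_le n c⁻¹ (c • x)
      rwa [inv_smul_smul₀ hc] at this
    calc ‖c‖ * maxN X n x ≤ ‖c‖ * (‖c⁻¹‖ * maxN X n (c • x)) :=
          mul_le_mul_of_nonneg_left h1 (norm_nonneg c)
      _ = maxN X n (c • x) := by
          rw [← mul_assoc, norm_inv, mul_inv_cancel₀ (norm_ne_zero_iff.mpr hc), one_mul]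

lemma map_smulMat {Z : Type} [NormedAddCommGroup Z] [NormedSpace ℂ Z]
    (u : X →L[ℂ] Z) {n : ℕ} (a b : Matrix (Fin n) (Fin n) ℂ) (x : Matrix (Fin n) (Fin n) X) :
    (smulMat a x b).map ⇑u = smulMat a (x.map ⇑u) b := by
  ext p q
  simp [smulMat, map_sum]

lemma maxN_smulMat_le (n : ℕ) (a b : Matrix (Fin n) (Fin n) ℂ)
    (x : Matrix (Fin n) (Fin n) X) :
    maxN X n (smulMat a x b) ≤ scNorm a * maxN X n x * scNorm b := by
  refine maxN_le n _ fun Z u hu => ?_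
  rw [map_smulMat]
  refine (Z.str.ruan_mul n a b _).trans ?_
  exact mul_le_mul_of_nonneg_right
    (mul_le_mul_of_nonneg_left (le_maxN n x Z u hu) (scNorm_nonneg' a)) (scNorm_nonneg' b)

lemma map_block {Z : Type} [Zero Z] (f : X → Z) (h0 : f 0 = 0) {n m : ℕ}
    (x : Matrix (Fin n) (Fin n) X) (y : Matrix (Fin m) (Fin m) X) :
    ((Matrix.fromBlocks x 0 0 y).submatrix ⇑finSumFinEquiv.symm ⇑finSumFinEquiv.symm).map f
      = (Matrix.fromBlocks (x.map f) 0 0 (y.map f)).submatrix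
          ⇑finSumFinEquiv.symm ⇑finSumFinEquiv.symm := by
  ext p q
  rw [Matrix.map_apply, Matrix.submatrix_apply, Matrix.submatrix_apply]
  cases hs : finSumFinEquiv.symm p <;> cases ht : finSumFinEquiv.symm q <;>
    simp [Matrix.map_apply, h0]

lemma maxN_block (n m : ℕ) (x : Matrix (Fin n) (Fin n) X) (y : Matrix (Fin m) (Fin m) X) :
    maxN X (n + m) ((Matrix.fromBlocks x 0 0 y).submatrix ⇑finSumFinEquiv.symm ⇑finSumFinEquiv.symm)
      = max (maxN X n x) (maxN X m y) := by
  apply le_antisymm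
  · refine maxN_le _ _ fun Z u hu => ?_
    rw [map_block ⇑u (map_zero u)]
    rw [Z.str.ruan_block]
    exact max_le_max (le_maxN n x Z u hu) (le_maxN m y Z u hu)
  · apply max_le
    · refine maxN_le n x fun Z u hu => ?_
      calc Z.str.N n (x.map ⇑u)
          ≤ max (Z.str.N n (x.map ⇑u)) (Z.str.N m (y.map ⇑u)) := le_max_left _ _
        _ = Z.str.N (n + m) ((Matrix.fromBlocks (x.map ⇑u) 0 0 (y.map ⇑u)).submatrix
              ⇑finSumFinEquiv.symm ⇑finSumFinEquiv.symm) := (Z.str.ruan_block n m _ _).symm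
        _ = Z.str.N (n + m) (((Matrix.fromBlocks x 0 0 y).submatrix
              ⇑finSumFinEquiv.symm ⇑finSumFinEquiv.symm).map ⇑u) := by
            rw [map_block ⇑u (map_zero u)]
        _ ≤ maxN X (n + m) _ := le_maxN (n + m) _ Z u hu
    · refine maxN_le m y fun Z u hu => ?_
      calc Z.str.N m (y.map ⇑u)
          ≤ max (Z.str.N n (x.map ⇑u)) (Z.str.N m (y.map ⇑u)) := le_max_right _ _
        _ = Z.str.N (n + m) ((Matrix.fromBlocks (x.map ⇑u) 0 0 (y.map ⇑u)).submatrix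
              ⇑finSumFinEquiv.symm ⇑finSumFinEquiv.symm) := (Z.str.ruan_block n m _ _).symm
        _ = Z.str.N (n + m) (((Matrix.fromBlocks x 0 0 y).submatrix
              ⇑finSumFinEquiv.symm ⇑finSumFinEquiv.symm).map ⇑u) := by
            rw [map_block ⇑u (map_zero u)]
        _ ≤ maxN X (n + m) _ := le_maxN (n + m) _ Z u hu

lemma maxN_level_one (a : X) : maxN X 1 (Matrix.of fun _ _ => a) = ‖a‖ := by
  apply le_antisymm
  · refine maxN_le 1 _ fun Z u hu => ?_
    have h : (Matrix.of fun _ _ : Fin 1 => a).map ⇑u = Matrix.of fun _ _ => u a := rfl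
    rw [h, Z.str.level_one]
    calc ‖u a‖ ≤ ‖u‖ * ‖a‖ := u.le_opNorm a
      _ ≤ 1 * ‖a‖ := mul_le_mul_of_nonneg_right hu (norm_nonneg a)
      _ = ‖a‖ := one_mul _
  · obtain ⟨g, hg1, hga⟩ := exists_dual_vector'' ℂ a
    have h := le_maxN 1 (Matrix.of fun _ _ => a) Csp g hg1
    have hval : Csp.str.N 1 ((Matrix.of fun _ _ : Fin 1 => a).map ⇑g) = ‖a‖ := by
      show scNorm _ = _
      rw [scNorm_one_by_one]
      show ‖g a‖ = ‖a‖
      rw [hga, RCLike.norm_ofReal, abs_of_nonneg (norm_nonneg a)]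
    rwa [hval] at h

end OSP
namespace OSP
open Matrix

variable {X : Type} [NormedAddCommGroup X] [NormedSpace ℂ X]

/-! ### Compression by corner projections -/

/-- The upper-left corner projection in `M_{n+m}(ℂ)`. -/
def Pleft (n m : ℕ) : Matrix (Fin (n + m)) (Fin (n + m)) ℂ :=
  (Matrix.fromBlocks 1 0 0 0).submatrix ⇑finSumFinEquiv.symm ⇑finSumFinEquiv.symm

/-- The lower-right corner projection in `M_{n+m}(ℂ)`. -/
def Pright (n m : ℕ) : Matrix (Fin (n + m)) (Fin (n + m)) ℂ :=
  (Matrix.fromBlocks 0 0 0 1).submatrix ⇑finSumFinEquiv.symm ⇑finSumFinEquiv.symm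

lemma scNorm_Pleft_le (n m : ℕ) : scNorm (Pleft n m) ≤ 1 := by
  rw [Pleft, scNorm_block]
  exact max_le scNorm_one_le (by rw [scNorm_zero]; exact zero_le_one)

lemma scNorm_Pright_le (n m : ℕ) : scNorm (Pright n m) ≤ 1 := by
  rw [Pright, scNorm_block]
  exact max_le (by rw [scNorm_zero]; exact zero_le_one) scNorm_one_le

lemma Pleft_apply (n m : ℕ) (s t : Fin n ⊕ Fin m) :
    Pleft n m (finSumFinEquiv s) (finSumFinEquiv t)
      = Sum.elim (fun i => Sum.elim (fun j => if i = j then (1:ℂ) else 0) (fun _ => 0) t)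
          (fun _ => 0) s := by
  rcases s with i | i <;> rcases t with j | j <;>
    simp [Pleft, Matrix.one_apply]

lemma Pright_apply (n m : ℕ) (s t : Fin n ⊕ Fin m) :
    Pright n m (finSumFinEquiv s) (finSumFinEquiv t)
      = Sum.elim (fun _ => 0)
          (fun i => Sum.elim (fun _ => 0) (fun j => if i = j then (1:ℂ) else 0) t) s := by
  rcases s with i | i <;> rcases t with j | j <;>
    simp [Pright, Matrix.one_apply]

lemma smulMat_Pleft {M : Type} [AddCommGroup M] [Module ℂ M] {n m : ℕ}
    (W : Matrix (Fin (n + m)) (Fin (n + m)) M) :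
    smulMat (Pleft n m) W (Pleft n m)
      = (Matrix.fromBlocks (W.submatrix (⇑finSumFinEquiv ∘ Sum.inl) (⇑finSumFinEquiv ∘ Sum.inl))
          0 0 0).submatrix ⇑finSumFinEquiv.symm ⇑finSumFinEquiv.symm := by
  ext p q
  obtain ⟨s, rfl⟩ := finSumFinEquiv.surjective p
  obtain ⟨t, rfl⟩ := finSumFinEquiv.surjective q
  rw [Matrix.submatrix_apply, Equiv.symm_apply_apply, Equiv.symm_apply_apply]
  show (∑ k, ∑ l, (Pleft n m (finSumFinEquiv s) k * Pleft n m l (finSumFinEquiv t)) • W k l) = _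
  have step1 : (∑ k, ∑ l, (Pleft n m (finSumFinEquiv s) k * Pleft n m l (finSumFinEquiv t)) • W k l)
      = ∑ k' : Fin n ⊕ Fin m, ∑ l' : Fin n ⊕ Fin m,
          (Pleft n m (finSumFinEquiv s) (finSumFinEquiv k')
            * Pleft n m (finSumFinEquiv l') (finSumFinEquiv t))
              • W (finSumFinEquiv k') (finSumFinEquiv l') := by
    rw [← Equiv.sum_comp finSumFinEquiv
      (fun k => ∑ l, (Pleft n m (finSumFinEquiv s) k * Pleft n m l (finSumFinEquiv t)) • W k l)]
    refine Finset.sum_congr rfl fun k' _ => ?_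
    rw [← Equiv.sum_comp finSumFinEquiv
      (fun l => (Pleft n m (finSumFinEquiv s) (finSumFinEquiv k')
        * Pleft n m l (finSumFinEquiv t)) • W (finSumFinEquiv k') l)]
  rw [step1]
  simp only [Pleft_apply]
  rcases s with i | i <;> rcases t with j | j <;>
    simp [Fintype.sum_sum_type, ite_smul, smul_ite, mul_ite, ite_mul, one_mul, mul_one,
      zero_mul, mul_zero, zero_smul, one_smul, Finset.sum_ite_eq, Finset.sum_ite_eq',
      Finset.sum_const_zero, Matrix.submatrix_apply, Function.comp]

lemma smulMat_Pright {M : Type} [AddCommGroup M] [Module ℂ M] {n m : ℕ}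
    (W : Matrix (Fin (n + m)) (Fin (n + m)) M) :
    smulMat (Pright n m) W (Pright n m)
      = (Matrix.fromBlocks 0 0 0
          (W.submatrix (⇑finSumFinEquiv ∘ Sum.inr) (⇑finSumFinEquiv ∘ Sum.inr))).submatrix
            ⇑finSumFinEquiv.symm ⇑finSumFinEquiv.symm := by
  ext p q
  obtain ⟨s, rfl⟩ := finSumFinEquiv.surjective p
  obtain ⟨t, rfl⟩ := finSumFinEquiv.surjective q
  rw [Matrix.submatrix_apply, Equiv.symm_apply_apply, Equiv.symm_apply_apply]
  show (∑ k, ∑ l, (Pright n m (finSumFinEquiv s) k * Pright n m l (finSumFinEquiv t)) • W k l) = _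
  have step1 : (∑ k, ∑ l, (Pright n m (finSumFinEquiv s) k * Pright n m l (finSumFinEquiv t)) • W k l)
      = ∑ k' : Fin n ⊕ Fin m, ∑ l' : Fin n ⊕ Fin m,
          (Pright n m (finSumFinEquiv s) (finSumFinEquiv k')
            * Pright n m (finSumFinEquiv l') (finSumFinEquiv t))
              • W (finSumFinEquiv k') (finSumFinEquiv l') := by
    rw [← Equiv.sum_comp finSumFinEquiv
      (fun k => ∑ l, (Pright n m (finSumFinEquiv s) k * Pright n m l (finSumFinEquiv t)) • W k l)]
    refine Finset.sum_congr rfl fun k' _ => ?_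
    rw [← Equiv.sum_comp finSumFinEquiv
      (fun l => (Pright n m (finSumFinEquiv s) (finSumFinEquiv k')
        * Pright n m l (finSumFinEquiv t)) • W (finSumFinEquiv k') l)]
  rw [step1]
  simp only [Pright_apply]
  rcases s with i | i <;> rcases t with j | j <;>
    simp [Fintype.sum_sum_type, ite_smul, smul_ite, mul_ite, ite_mul, one_mul, mul_one,
      zero_mul, mul_zero, zero_smul, one_smul, Finset.sum_ite_eq, Finset.sum_ite_eq',
      Finset.sum_const_zero, Matrix.submatrix_apply, Function.comp]

lemma oss_corner_left (S : OSS X) {n m : ℕ} (W : Matrix (Fin (n + m)) (Fin (n + m)) X) :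
    S.N n (W.submatrix (⇑finSumFinEquiv ∘ Sum.inl) (⇑finSumFinEquiv ∘ Sum.inl)) ≤ S.N (n + m) W := by
  have h1 : S.N n (W.submatrix (⇑finSumFinEquiv ∘ Sum.inl) (⇑finSumFinEquiv ∘ Sum.inl))
      ≤ S.N (n + m) (smulMat (Pleft n m) W (Pleft n m)) := by
    rw [smulMat_Pleft]
    rw [S.ruan_block]
    exact le_max_left _ _
  refine h1.trans ((S.ruan_mul _ _ _ _).trans ?_)
  exact mul3_le (scNorm_nonneg' _) (scNorm_nonneg' _) (scNorm_Pleft_le n m)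
    (scNorm_Pleft_le n m) (S.nonneg _ _)

lemma oss_corner_right (S : OSS X) {n m : ℕ} (W : Matrix (Fin (n + m)) (Fin (n + m)) X) :
    S.N m (W.submatrix (⇑finSumFinEquiv ∘ Sum.inr) (⇑finSumFinEquiv ∘ Sum.inr)) ≤ S.N (n + m) W := by
  have h1 : S.N m (W.submatrix (⇑finSumFinEquiv ∘ Sum.inr) (⇑finSumFinEquiv ∘ Sum.inr))
      ≤ S.N (n + m) (smulMat (Pright n m) W (Pright n m)) := by
    rw [smulMat_Pright]
    rw [S.ruan_block]
    exact le_max_right _ _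
  refine h1.trans ((S.ruan_mul _ _ _ _).trans ?_)
  exact mul3_le (scNorm_nonneg' _) (scNorm_nonneg' _) (scNorm_Pright_le n m)
    (scNorm_Pright_le n m) (S.nonneg _ _)

lemma maxN_corner_left {n m : ℕ} (W : Matrix (Fin (n + m)) (Fin (n + m)) X) :
    maxN X n (W.submatrix (⇑finSumFinEquiv ∘ Sum.inl) (⇑finSumFinEquiv ∘ Sum.inl))
      ≤ maxN X (n + m) W := by
  refine maxN_le n _ fun Z u hu => ?_
  have h : (W.submatrix (⇑finSumFinEquiv ∘ Sum.inl) (⇑finSumFinEquiv ∘ Sum.inl)).map ⇑u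
      = (W.map ⇑u).submatrix (⇑finSumFinEquiv ∘ Sum.inl) (⇑finSumFinEquiv ∘ Sum.inl) := rfl
  rw [h]
  exact (oss_corner_left Z.str (W.map ⇑u)).trans (le_maxN (n + m) W Z u hu)

lemma maxN_corner_right {n m : ℕ} (W : Matrix (Fin (n + m)) (Fin (n + m)) X) :
    maxN X m (W.submatrix (⇑finSumFinEquiv ∘ Sum.inr) (⇑finSumFinEquiv ∘ Sum.inr))
      ≤ maxN X (n + m) W := by
  refine maxN_le m _ fun Z u hu => ?_
  have h : (W.submatrix (⇑finSumFinEquiv ∘ Sum.inr) (⇑finSumFinEquiv ∘ Sum.inr)).map ⇑u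
      = (W.map ⇑u).submatrix (⇑finSumFinEquiv ∘ Sum.inr) (⇑finSumFinEquiv ∘ Sum.inr) := rfl
  rw [h]
  exact (oss_corner_right Z.str (W.map ⇑u)).trans (le_maxN (n + m) W Z u hu)

end OSP
namespace OSP
open Matrix

variable {X : Type} [NormedAddCommGroup X] [NormedSpace ℂ X] (Y : Submodule ℂ X)

/-! ### The quotient matrix norms -/

/-- The quotient map as a continuous linear map. -/
def mkC : X →L[ℂ] X ⧸ Y :=
  LinearMap.mkContinuous Y.mkQ 1 fun x => by
    simpa using Submodule.Quotient.norm_mk_le Y x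

lemma mkC_coe : ⇑(mkC Y) = ⇑Y.mkQ := rfl

lemma mkC_norm_le : ‖mkC Y‖ ≤ 1 :=
  LinearMap.mkContinuous_norm_le _ zero_le_one _

lemma quot_lift_exists {n : ℕ} (z : Matrix (Fin n) (Fin n) (X ⧸ Y)) :
    ∃ x : Matrix (Fin n) (Fin n) X, x.map ⇑Y.mkQ = z := by
  choose f hf using fun i j => Submodule.Quotient.mk_surjective Y (z i j)
  refine ⟨Matrix.of f, ?_⟩
  ext i j
  simpa [Matrix.map_apply, Submodule.mkQ_apply] using hf i j

lemma quotN_le {n : ℕ} (z : Matrix (Fin n) (Fin n) (X ⧸ Y))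
    (x : Matrix (Fin n) (Fin n) X) (hx : x.map ⇑Y.mkQ = z) :
    quotN (maxN X) Y n z ≤ maxN X n x := by
  refine csInf_le ⟨0, ?_⟩ ⟨x, hx, rfl⟩
  rintro r ⟨x', _, rfl⟩
  exact maxN_nonneg _ _

lemma le_quotN {n : ℕ} (z : Matrix (Fin n) (Fin n) (X ⧸ Y)) {C : ℝ}
    (h : ∀ x : Matrix (Fin n) (Fin n) X, x.map ⇑Y.mkQ = z → C ≤ maxN X n x) :
    C ≤ quotN (maxN X) Y n z := by
  obtain ⟨x0, hx0⟩ := quot_lift_exists Y z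
  refine le_csInf ⟨_, x0, hx0, rfl⟩ ?_
  rintro r ⟨x', hx', rfl⟩
  exact h x' hx'

lemma quotN_nonneg {n : ℕ} (z : Matrix (Fin n) (Fin n) (X ⧸ Y)) :
    0 ≤ quotN (maxN X) Y n z :=
  le_quotN Y z fun x _ => maxN_nonneg n x

lemma quot_exists_lift_lt {n : ℕ} (z : Matrix (Fin n) (Fin n) (X ⧸ Y)) {ε : ℝ} (hε : 0 < ε) :
    ∃ x : Matrix (Fin n) (Fin n) X,
      x.map ⇑Y.mkQ = z ∧ maxN X n x < quotN (maxN X) Y n z + ε := by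
  obtain ⟨x0, hx0⟩ := quot_lift_exists Y z
  obtain ⟨r, hr, hlt⟩ := Real.lt_sInf_add_pos (s :=
    {r | ∃ x : Matrix (Fin n) (Fin n) X, x.map ⇑Y.mkQ = z ∧ r = maxN X n x})
    ⟨_, x0, hx0, rfl⟩ hε
  obtain ⟨x, hx, rfl⟩ := hr
  exact ⟨x, hx, hlt⟩

variable [IsClosed (Y : Set X)]

lemma quot_entry_le {n : ℕ} (z : Matrix (Fin n) (Fin n) (X ⧸ Y)) (i j : Fin n) :
    ‖z i j‖ ≤ quotN (maxN X) Y n z := by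
  refine le_quotN Y z fun x hx => ?_
  obtain ⟨g, hg1, hgz⟩ := exists_dual_vector'' ℂ (z i j)
  have hf : ‖g.comp (mkC Y)‖ ≤ 1 := by
    refine (g.opNorm_comp_le (mkC Y)).trans ?_
    calc ‖g‖ * ‖mkC Y‖ ≤ 1 * 1 :=
          mul_le_mul hg1 (mkC_norm_le Y) (ContinuousLinearMap.opNorm_nonneg _) zero_le_one
      _ = 1 := one_mul 1
  have key : x.map ⇑(g.comp (mkC Y)) = z.map ⇑g := by
    rw [← hx]
    ext p q
    simp [Matrix.map_apply, mkC_coe]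
  calc ‖z i j‖ = ‖(z.map ⇑g) i j‖ := by
        rw [Matrix.map_apply, hgz, RCLike.norm_ofReal, abs_of_nonneg (norm_nonneg _)]
    _ ≤ Cop.N n (z.map ⇑g) := oss_entry_le Cop _ i j
    _ = Csp.str.N n (x.map ⇑(g.comp (mkC Y))) := by rw [key]
    _ ≤ maxN X n x := le_maxN n x Csp (g.comp (mkC Y)) hf

lemma le_mul_of_forall_eps {A B K : ℝ} (hK : 0 ≤ K) (h : ∀ ε, 0 < ε → A ≤ K * (B + ε)) :
    A ≤ K * B := by
  apply le_of_forall_pos_le_add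
  intro δ hδ
  have hK1 : (0:ℝ) < K + 1 := by linarith
  have h' := h (δ / (K + 1)) (by positivity)
  have h2 : K * (δ / (K + 1)) ≤ δ := by
    rw [mul_div_assoc'] at *
    rw [div_le_iff₀ hK1]
    nlinarith
  nlinarith [h']

/-- The quotient operator space structure on `X ⧸ Y`. -/
def QOSS : OSS (X ⧸ Y) where
  N := quotN (maxN X) Y
  nonneg n z := quotN_nonneg Y z
  add_le n z w := by
    apply le_of_forall_pos_le_add
    intro ε hε
    obtain ⟨x, hx, hxe⟩ := quot_exists_lift_lt Y z (half_pos hε)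
    obtain ⟨y, hy, hye⟩ := quot_exists_lift_lt Y w (half_pos hε)
    have hlift : (x + y).map ⇑Y.mkQ = z + w := by
      rw [← hx, ← hy]; ext i j; simp
    calc quotN (maxN X) Y n (z + w) ≤ maxN X n (x + y) := quotN_le Y _ _ hlift
      _ ≤ maxN X n x + maxN X n y := maxN_add_le n x y
      _ ≤ quotN (maxN X) Y n z + quotN (maxN X) Y n w + ε := by linarith
  smul_eq n c z := by
    have hle : ∀ (c' : ℂ) (z' : Matrix (Fin n) (Fin n) (X ⧸ Y)),
        quotN (maxN X) Y n (c' • z') ≤ ‖c'‖ * quotN (maxN X) Y n z' := by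
      intro c' z'
      apply le_mul_of_forall_eps (norm_nonneg c')
      intro ε hε
      obtain ⟨x, hx, hxe⟩ := quot_exists_lift_lt Y z' hε
      have hlift : (c' • x).map ⇑Y.mkQ = c' • z' := by
        rw [← hx]; ext i j; simp
      calc quotN (maxN X) Y n (c' • z') ≤ maxN X n (c' • x) := quotN_le Y _ _ hlift
        _ = ‖c'‖ * maxN X n x := maxN_smul n c' x
        _ ≤ ‖c'‖ * (quotN (maxN X) Y n z' + ε) :=
            mul_le_mul_of_nonneg_left hxe.le (norm_nonneg c')
    rcases eq_or_ne c 0 with rfl | hc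
    · have h0 : quotN (maxN X) Y n ((0:ℂ) • z) ≤ 0 := by
        simpa using hle 0 z
      have h0' := quotN_nonneg Y ((0:ℂ) • z)
      simp only [norm_zero, zero_mul]
      linarith
    · refine le_antisymm (hle c z) ?_
      have h1 : quotN (maxN X) Y n z ≤ ‖c⁻¹‖ * quotN (maxN X) Y n (c • z) := by
        have := hle c⁻¹ (c • z)
        rwa [inv_smul_smul₀ hc] at this
      calc ‖c‖ * quotN (maxN X) Y n z
          ≤ ‖c‖ * (‖c⁻¹‖ * quotN (maxN X) Y n (c • z)) :=
            mul_le_mul_of_nonneg_left h1 (norm_nonneg c)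
        _ = quotN (maxN X) Y n (c • z) := by
            rw [← mul_assoc, norm_inv, mul_inv_cancel₀ (norm_ne_zero_iff.mpr hc), one_mul]
  eq_zero n z h := by
    ext i j
    have h1 := quot_entry_le Y z i j
    rw [h] at h1
    have h0 : ‖z i j‖ = 0 := le_antisymm h1 (norm_nonneg _)
    simpa using norm_eq_zero.mp h0
  level_one z := by
    apply le_antisymm
    · apply le_of_forall_pos_le_add
      intro ε hε
      obtain ⟨a, ha, hna⟩ := Submodule.Quotient.norm_mk_lt z hε
      have hlift : (Matrix.of fun _ _ : Fin 1 => a).map ⇑Y.mkQ = Matrix.of fun _ _ => z := by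
        ext i j
        simp [Matrix.map_apply, Submodule.mkQ_apply, ha]
      calc quotN (maxN X) Y 1 (Matrix.of fun _ _ => z) ≤ maxN X 1 (Matrix.of fun _ _ => a) :=
            quotN_le Y _ _ hlift
        _ = ‖a‖ := maxN_level_one a
        _ ≤ ‖z‖ + ε := hna.le
    · simpa using quot_entry_le Y (Matrix.of fun _ _ : Fin 1 => z) 0 0
  ruan_mul n a b z := by
    have key : quotN (maxN X) Y n (smulMat a z b)
        ≤ (scNorm a * scNorm b) * quotN (maxN X) Y n z := by
      apply le_mul_of_forall_eps (mul_nonneg (scNorm_nonneg' a) (scNorm_nonneg' b))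
      intro ε hε
      obtain ⟨x, hx, hxe⟩ := quot_exists_lift_lt Y z hε
      have hlift : (smulMat a x b).map ⇑Y.mkQ = smulMat a z b := by
        rw [← hx]
        ext p q
        simp [smulMat, map_sum]
      calc quotN (maxN X) Y n (smulMat a z b) ≤ maxN X n (smulMat a x b) :=
            quotN_le Y _ _ hlift
        _ ≤ scNorm a * maxN X n x * scNorm b := maxN_smulMat_le n a b x
        _ ≤ scNorm a * (quotN (maxN X) Y n z + ε) * scNorm b :=
            mul_le_mul_of_nonneg_right
              (mul_le_mul_of_nonneg_left hxe.le (scNorm_nonneg' a)) (scNorm_nonneg' b)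
        _ = (scNorm a * scNorm b) * (quotN (maxN X) Y n z + ε) := by ring
    calc quotN (maxN X) Y n (smulMat a z b)
        ≤ (scNorm a * scNorm b) * quotN (maxN X) Y n z := key
      _ = scNorm a * quotN (maxN X) Y n z * scNorm b := by ring
  ruan_block n m z w := by
    apply le_antisymm
    · apply le_of_forall_pos_le_add
      intro ε hε
      obtain ⟨x, hx, hxe⟩ := quot_exists_lift_lt Y z hε
      obtain ⟨y, hy, hye⟩ := quot_exists_lift_lt Y w hε
      have hlift : ((Matrix.fromBlocks x 0 0 y).submatrix
            ⇑finSumFinEquiv.symm ⇑finSumFinEquiv.symm).map ⇑Y.mkQ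
          = (Matrix.fromBlocks z 0 0 w).submatrix ⇑finSumFinEquiv.symm ⇑finSumFinEquiv.symm := by
        rw [map_block ⇑Y.mkQ (map_zero Y.mkQ), hx, hy]
      calc quotN (maxN X) Y (n + m) _ ≤ maxN X (n + m) _ := quotN_le Y _ _ hlift
        _ = max (maxN X n x) (maxN X m y) := maxN_block n m x y
        _ ≤ max (quotN (maxN X) Y n z + ε) (quotN (maxN X) Y m w + ε) :=
            max_le_max hxe.le hye.le
        _ = max (quotN (maxN X) Y n z) (quotN (maxN X) Y m w) + ε := by
            rw [max_add_add_right]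
    · apply max_le
      · refine le_quotN Y _ fun W hW => ?_
        have hxW : (W.submatrix (⇑finSumFinEquiv ∘ Sum.inl) (⇑finSumFinEquiv ∘ Sum.inl)).map
            ⇑Y.mkQ = z := by
          ext i j
          have hentry := congr_fun (congr_fun hW (finSumFinEquiv (Sum.inl i)))
            (finSumFinEquiv (Sum.inl j))
          simpa [Matrix.map_apply, Matrix.submatrix_apply] using hentry
        exact (quotN_le Y z _ hxW).trans (maxN_corner_left W)
      · refine le_quotN Y _ fun W hW => ?_
        have hyW : (W.submatrix (⇑finSumFinEquiv ∘ Sum.inr) (⇑finSumFinEquiv ∘ Sum.inr)).map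
            ⇑Y.mkQ = w := by
          ext i j
          have hentry := congr_fun (congr_fun hW (finSumFinEquiv (Sum.inr i)))
            (finSumFinEquiv (Sum.inr j))
          simpa [Matrix.map_apply, Matrix.submatrix_apply] using hentry
        exact (quotN_le Y w _ hyW).trans (maxN_corner_right W)

end OSP


/-- if `X` is a maximal operator space and `Y ⊆ X` is closed, then
`Max(X/Y) = Max(X)/Y` completely isometrically. -/
theorem stmt9 (X : Type) [NormedAddCommGroup X] [NormedSpace ℂ X] [CompleteSpace X]
    (Y : Submodule ℂ X) [IsClosed (Y : Set X)] :
    ∀ (n : ℕ) (z : Matrix (Fin n) (Fin n) (X ⧸ Y)),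
      OSP.maxN (X ⧸ Y) n z = OSP.quotN (OSP.maxN X) Y n z := by
  intro n z
  apply le_antisymm
  · apply OSP.maxN_le
    intro Z u hu
    apply OSP.le_quotN
    intro x hx
    have hc : ‖u.comp (OSP.mkC Y)‖ ≤ 1 := by
      refine (u.opNorm_comp_le (OSP.mkC Y)).trans ?_
      calc ‖u‖ * ‖OSP.mkC Y‖ ≤ 1 * 1 :=
            mul_le_mul hu (OSP.mkC_norm_le Y) (ContinuousLinearMap.opNorm_nonneg _) zero_le_one
        _ = 1 := one_mul 1
    have hmap : z.map ⇑u = x.map ⇑(u.comp (OSP.mkC Y)) := by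
      rw [← hx, Matrix.map_map]
      rfl
    rw [hmap]
    exact OSP.le_maxN n x Z (u.comp (OSP.mkC Y)) hc
  · have h := OSP.le_maxN n z { carrier := X ⧸ Y, str := OSP.QOSS Y }
      (ContinuousLinearMap.id ℂ (X ⧸ Y)) ContinuousLinearMap.norm_id_le
    have hz : z.map ⇑(ContinuousLinearMap.id ℂ (X ⧸ Y)) = z := by
      ext i j; rfl
    rw [hz] at h
    exact h
end
end

section
/- If X is a Hilbertian operator space and Y a closed subspace of X, then the quotient operator space Min(X)/Y is completely isometrically isomorphic to Min(X/Y); in particular every quotient of a minimal Hilbertian operator space is minimal. -/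
noncomputable section

namespace OSP
open InnerProductSpace

lemma euclid_coord_le {m : Type} [Fintype m] [DecidableEq m] (v : EuclideanSpace ℂ m) (i : m) :
    ‖v i‖ ≤ ‖v‖ := by
  have h : (inner ℂ (EuclideanSpace.single i (1:ℂ)) v : ℂ) = v i := by
    simp [EuclideanSpace.inner_single_left]
  calc ‖v i‖ = ‖(inner ℂ (EuclideanSpace.single i (1:ℂ)) v : ℂ)‖ := by rw [h]
    _ ≤ ‖EuclideanSpace.single i (1:ℂ)‖ * ‖v‖ := norm_inner_le_norm _ _
    _ = ‖v‖ := by simp [EuclideanSpace.norm_single]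

lemma euclid_norm_le_sum {m : Type} [Fintype m] (w : EuclideanSpace ℂ m) :
    ‖w‖ ≤ ∑ i, ‖w i‖ := by
  rw [EuclideanSpace.norm_eq]
  calc Real.sqrt (∑ i, ‖w i‖ ^ 2) ≤ Real.sqrt ((∑ i, ‖w i‖) ^ 2) :=
        Real.sqrt_le_sqrt (Finset.sum_sq_le_sq_sum_of_nonneg fun _ _ => norm_nonneg _)
    _ = ∑ i, ‖w i‖ := Real.sqrt_sq (by positivity)

lemma scNorm_le_sum {m : Type} [Fintype m] [DecidableEq m] (A : Matrix m m ℂ) :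
    scNorm A ≤ ∑ i, ∑ j, ‖A i j‖ := by
  refine ContinuousLinearMap.opNorm_le_bound _ (by positivity) fun v => ?_
  have hv : v = (WithLp.equiv 2 (m → ℂ)).symm ((WithLp.equiv 2 (m → ℂ)) v) := by simp
  rw [hv, WithLp.equiv_symm_apply, Matrix.toEuclideanCLM_toLp]
  set x : m → ℂ := (WithLp.equiv 2 (m → ℂ)) v with hx
  calc ‖(WithLp.equiv 2 (m → ℂ)).symm (Matrix.toLin' A x)‖
       ≤ ∑ i, ‖((WithLp.equiv 2 (m → ℂ)).symm (Matrix.toLin' A x) : EuclideanSpace ℂ m) i‖ :=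
        euclid_norm_le_sum _
    _ = ∑ i, ‖A.mulVec x i‖ := by simp [Matrix.toLin'_apply]
    _ ≤ ∑ i, ∑ j, ‖A i j‖ * ‖(WithLp.equiv 2 (m → ℂ)).symm x‖ := by
        refine Finset.sum_le_sum fun i _ => ?_
        calc ‖A.mulVec x i‖ = ‖∑ j, A i j * x j‖ := by rfl
          _ ≤ ∑ j, ‖A i j * x j‖ := norm_sum_le _ _
          _ ≤ ∑ j, ‖A i j‖ * ‖(WithLp.equiv 2 (m → ℂ)).symm x‖ := by
              refine Finset.sum_le_sum fun j _ => ?_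
              rw [norm_mul]
              exact mul_le_mul_of_nonneg_left
                (euclid_coord_le ((WithLp.equiv 2 (m → ℂ)).symm x) j) (norm_nonneg _)
    _ = (∑ i, ∑ j, ‖A i j‖) * ‖(WithLp.equiv 2 (m → ℂ)).symm x‖ := by
        rw [Finset.sum_mul]; exact Finset.sum_congr rfl fun i _ => (Finset.sum_mul ..).symm

variable {W : Type} [NormedAddCommGroup W] [NormedSpace ℂ W]

lemma map_zero_fun {n : ℕ} (x : Matrix (Fin n) (Fin n) W) :
    x.map ⇑(0 : W →L[ℂ] ℂ) = 0 := by
  ext i j; simp [Matrix.map_apply]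

lemma zero_mem_minSet {n : ℕ} (x : Matrix (Fin n) (Fin n) W) :
    (0:ℝ) ∈ {r | ∃ f : W →L[ℂ] ℂ, ‖f‖ ≤ 1 ∧ r = scNorm (x.map ⇑f)} := by
  refine ⟨0, by simp, ?_⟩
  rw [map_zero_fun]
  have h0 : Matrix.toEuclideanCLM (𝕜 := ℂ) (n := Fin n) (0 : Matrix (Fin n) (Fin n) ℂ) = 0 :=
    map_zero _
  rw [scNorm, h0, norm_zero]

lemma minSet_bddAbove {n : ℕ} (x : Matrix (Fin n) (Fin n) W) :
    BddAbove {r | ∃ f : W →L[ℂ] ℂ, ‖f‖ ≤ 1 ∧ r = scNorm (x.map ⇑f)} := by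
  refine ⟨∑ i, ∑ j, ‖x i j‖, fun r hr => ?_⟩
  obtain ⟨f, hf, rfl⟩ := hr
  refine (scNorm_le_sum _).trans ?_
  refine Finset.sum_le_sum fun i _ => Finset.sum_le_sum fun j _ => ?_
  rw [Matrix.map_apply]
  calc ‖f (x i j)‖ ≤ ‖f‖ * ‖x i j‖ := f.le_opNorm _
    _ ≤ 1 * ‖x i j‖ := mul_le_mul_of_nonneg_right hf (norm_nonneg _)
    _ = ‖x i j‖ := one_mul _

lemma minN_nonneg {n : ℕ} (x : Matrix (Fin n) (Fin n) W) : 0 ≤ minN W n x :=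
  le_csSup (minSet_bddAbove x) (zero_mem_minSet x)

/-- lower bound: any lift has bigger min-norm -/
lemma lift_ge (Y : Submodule ℂ W) [IsClosed (Y : Set W)] {n : ℕ}
    (z : Matrix (Fin n) (Fin n) (W ⧸ Y)) (x : Matrix (Fin n) (Fin n) W)
    (hx : x.map ⇑Y.mkQ = z) : minN (W ⧸ Y) n z ≤ minN W n x := by
  refine csSup_le ⟨0, zero_mem_minSet z⟩ ?_
  rintro r ⟨g, hg, rfl⟩
  have mkQb : ∀ w : W, ‖Y.mkQ w‖ ≤ 1 * ‖w‖ := fun w => by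
    simpa using Submodule.Quotient.norm_mk_le Y w
  set mkQc : W →L[ℂ] W ⧸ Y := LinearMap.mkContinuous Y.mkQ 1 mkQb with hmkQc
  have hmkQcn : ‖mkQc‖ ≤ 1 := LinearMap.mkContinuous_norm_le _ zero_le_one _
  set f : W →L[ℂ] ℂ := g.comp mkQc with hfdef
  have hfn : ‖f‖ ≤ 1 := by
    calc ‖f‖ ≤ ‖g‖ * ‖mkQc‖ := ContinuousLinearMap.opNorm_comp_le _ _
      _ ≤ 1 * 1 := mul_le_mul hg hmkQcn (ContinuousLinearMap.opNorm_nonneg _) zero_le_one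
      _ = 1 := one_mul 1
  have hmaps : x.map ⇑f = z.map ⇑g := by
    ext i j
    have : Y.mkQ (x i j) = z i j := by
      have := congrFun (congrFun hx i) j
      simpa [Matrix.map_apply] using this
    simp [Matrix.map_apply, hfdef, hmkQc, this]
  exact le_csSup (minSet_bddAbove x) ⟨f, hfn, by rw [hmaps]⟩

/-- There is a lift whose min-norm is at most that of `z`. -/
lemma exists_good_lift (X : Type) [NormedAddCommGroup X] [NormedSpace ℂ X]
    (H : Type) [NormedAddCommGroup H] [InnerProductSpace ℂ H] [CompleteSpace H]
    (e : X ≃ₗᵢ[ℂ] H)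
    (Y : Submodule ℂ X) [IsClosed (Y : Set X)] (n : ℕ)
    (z : Matrix (Fin n) (Fin n) (X ⧸ Y)) :
    ∃ x : Matrix (Fin n) (Fin n) X, x.map ⇑Y.mkQ = z ∧ minN X n x ≤ minN (X ⧸ Y) n z := by
  classical
  set K : Submodule ℂ H := Y.map e.toLinearMap with hK
  have hKclosed : IsClosed (K : Set H) := by
    have : (K : Set H) = ⇑e.toHomeomorph '' (Y : Set X) := by
      ext h; simp [hK, Submodule.mem_map]
    rw [this]
    exact e.toHomeomorph.isClosedMap _ ‹IsClosed (Y : Set X)›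
  haveI : CompleteSpace K := hKclosed.completeSpace_coe
  have hsur : ∀ i j, ∃ w : X, Y.mkQ w = z i j := fun i j => Y.mkQ_surjective (z i j)
  choose w hw using hsur
  set x : Matrix (Fin n) (Fin n) X :=
    Matrix.of fun i j => e.symm ((Submodule.orthogonalProjectionOnto Kᗮ (e (w i j)) : H)) with hxdef
  have hxmem : ∀ i j, e (x i j) ∈ Kᗮ := fun i j => by
    simp only [hxdef, Matrix.of_apply, LinearIsometryEquiv.apply_symm_apply]
    exact SetLike.coe_mem _
  have hxlift : ∀ i j, Y.mkQ (x i j) = z i j := by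
    intro i j
    have hsub : w i j - x i j ∈ Y := by
      have h1 : e (w i j) - e (x i j) ∈ Kᗮᗮ := by
        have := Submodule.sub_starProjection_mem_orthogonal (K := Kᗮ) (e (w i j))
        simpa only [hxdef, Matrix.of_apply, LinearIsometryEquiv.apply_symm_apply, Submodule.starProjection_apply] using this
      rw [Submodule.orthogonal_orthogonal] at h1
      have h2 : e (w i j - x i j) ∈ K := by simpa [map_sub] using h1
      obtain ⟨y, hy, hey⟩ := Submodule.mem_map.mp h2
      have : y = w i j - x i j := e.injective hey
      rwa [this] at hy
    have := (Submodule.Quotient.eq Y).mpr hsub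
    simp only [Submodule.mkQ_apply]
    rw [← this, ← Submodule.mkQ_apply, hw]
  refine ⟨x, ?_, ?_⟩
  · ext i j; simp [Matrix.map_apply, hxlift i j]
  refine csSup_le ⟨0, zero_mem_minSet x⟩ ?_
  rintro r ⟨f, hf, rfl⟩
  set F : H →L[ℂ] ℂ := f.comp (e.symm.toContinuousLinearEquiv : H →L[ℂ] X) with hF
  set v : H := (toDual ℂ H).symm F with hv
  have hFv : ∀ h : H, F h = inner ℂ v h := fun h => ((toDual_symm_apply).symm : F h = _)
  have hvn : ‖v‖ ≤ 1 := by
    rw [hv]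
    rw [LinearIsometryEquiv.norm_map]
    refine ContinuousLinearMap.opNorm_le_bound _ zero_le_one fun h => ?_
    calc ‖F h‖ ≤ ‖f‖ * ‖e.symm h‖ := f.le_opNorm _
      _ = ‖f‖ * ‖h‖ := by rw [e.symm.norm_map]
      _ ≤ 1 * ‖h‖ := mul_le_mul_of_nonneg_right hf (norm_nonneg _)
  set v1 : H := (Submodule.orthogonalProjectionOnto Kᗮ v : H) with hv1
  have hv1n : ‖v1‖ ≤ 1 := by
    calc ‖v1‖ ≤ ‖Submodule.orthogonalProjectionOnto Kᗮ‖ * ‖v‖ := (Submodule.orthogonalProjectionOnto Kᗮ).le_opNorm v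
      _ ≤ 1 * 1 := mul_le_mul (Submodule.orthogonalProjectionOnto_norm_le _) hvn (norm_nonneg _) zero_le_one
      _ = 1 := one_mul 1
  set g0 : X →L[ℂ] ℂ := (toDual ℂ H v1).comp (e.toContinuousLinearEquiv : X →L[ℂ] H) with hg0
  have hg0apply : ∀ u : X, g0 u = inner ℂ v1 (e u) := fun u => by
    simp [hg0, toDual_apply_apply]
  have hg0Y : ∀ y ∈ Y, g0 y = 0 := by
    intro y hy
    rw [hg0apply]
    exact Submodule.inner_left_of_mem_orthogonal (Submodule.mem_map_of_mem hy)
      (SetLike.coe_mem _)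
  have hg0n : ‖g0‖ ≤ 1 := by
    refine ContinuousLinearMap.opNorm_le_bound _ zero_le_one fun u => ?_
    rw [hg0apply]
    calc ‖(inner ℂ v1 (e u) : ℂ)‖ ≤ ‖v1‖ * ‖e u‖ := norm_inner_le_norm _ _
      _ = ‖v1‖ * ‖u‖ := by rw [e.norm_map]
      _ ≤ 1 * ‖u‖ := mul_le_mul_of_nonneg_right hv1n (norm_nonneg _)
  have hker : Y ≤ LinearMap.ker (g0 : X →ₗ[ℂ] ℂ) := fun y hy => by
    simpa using hg0Y y hy
  set gl : (X ⧸ Y) →ₗ[ℂ] ℂ := Y.liftQ (g0 : X →ₗ[ℂ] ℂ) hker with hgl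
  have hglb : ∀ q : X ⧸ Y, ‖gl q‖ ≤ 1 * ‖q‖ := by
    intro q
    rw [one_mul]
    refine le_of_forall_pos_le_add fun ε hε => ?_
    obtain ⟨m, hm, hmn⟩ := Submodule.Quotient.norm_mk_lt q hε
    have : gl q = g0 m := by rw [← hm]; rfl
    rw [this]
    calc ‖g0 m‖ ≤ ‖g0‖ * ‖m‖ := g0.le_opNorm m
      _ ≤ 1 * ‖m‖ := mul_le_mul_of_nonneg_right hg0n (norm_nonneg _)
      _ = ‖m‖ := one_mul _
      _ ≤ ‖q‖ + ε := hmn.le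
  set g : (X ⧸ Y) →L[ℂ] ℂ := gl.mkContinuous 1 hglb with hg
  have hgn : ‖g‖ ≤ 1 := LinearMap.mkContinuous_norm_le _ zero_le_one _
  have hpt : ∀ i j, f (x i j) = g (z i j) := by
    intro i j
    have h1 : g (z i j) = g0 (x i j) := by
      rw [← hxlift i j]
      rfl
    have h2 : f (x i j) = inner ℂ v (e (x i j)) := by
      have : f (x i j) = F (e (x i j)) := by
        simp [hF]
      rw [this, hFv]
    have h3 : (inner ℂ v (e (x i j)) : ℂ) = inner ℂ v1 (e (x i j)) := by
      have hdiff : v - v1 ∈ Kᗮᗮ := Submodule.sub_starProjection_mem_orthogonal (K := Kᗮ) v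
      have hz : (inner ℂ (v - v1) (e (x i j)) : ℂ) = 0 :=
        Submodule.inner_left_of_mem_orthogonal (hxmem i j) hdiff
      have := inner_sub_left (𝕜 := ℂ) v v1 (e (x i j))
      rw [hz] at this
      linear_combination -this
    rw [h1, h2, h3, hg0apply]
  have hmats : x.map ⇑f = z.map ⇑g := by
    ext i j; simp [Matrix.map_apply, hpt i j]
  rw [hmats]
  exact le_csSup (minSet_bddAbove z) ⟨g, hgn, rfl⟩

end OSP
/-- if `X` is Hilbertian (isometric to a Hilbert space) and `Y ⊆ X` is a
closed subspace, then `Min(X)/Y = Min(X/Y)` completely isometrically. -/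
theorem stmt13 (X : Type) [NormedAddCommGroup X] [NormedSpace ℂ X]
    (H : Type) [NormedAddCommGroup H] [InnerProductSpace ℂ H] [CompleteSpace H]
    (e : X ≃ₗᵢ[ℂ] H)
    (Y : Submodule ℂ X) [IsClosed (Y : Set X)] :
    ∀ (n : ℕ) (z : Matrix (Fin n) (Fin n) (X ⧸ Y)),
      OSP.quotN (OSP.minN X) Y n z = OSP.minN (X ⧸ Y) n z := by
  intro n z
  obtain ⟨x0, hx0, hle⟩ := OSP.exists_good_lift X H e Y n z
  refine le_antisymm ?_ ?_
  · have h1 : OSP.quotN (OSP.minN X) Y n z ≤ OSP.minN X n x0 := by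
      refine csInf_le ⟨0, ?_⟩ ⟨x0, hx0, rfl⟩
      rintro r ⟨x, -, rfl⟩
      exact OSP.minN_nonneg x
    exact h1.trans hle
  · refine le_csInf ⟨OSP.minN X n x0, x0, hx0, rfl⟩ ?_
    rintro r ⟨x, hx, rfl⟩
    exact OSP.lift_ge Y z x hx
end
end

section
/- Let X be an infinite dimensional operator space. If every finite dimensional subspace of X, with the inherited matrix norms, is a maximal operator space, then X is maximal. -/
noncomputable section

namespace OSP

variable {X : Type} [NormedAddCommGroup X] [NormedSpace ℂ X]

/-- The quotient map `X → X ⧸ Y` as a continuous linear map. -/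
def mkQCLM (Y : Submodule ℂ X) [IsClosed (Y : Set X)] : X →L[ℂ] X ⧸ Y :=
  Y.mkQ.mkContinuous 1 fun x => by
    simpa using Submodule.Quotient.norm_mk_le Y x

/-- Precomposition with the quotient map: the canonical embedding `(X/Y)* → X*`,
whose range is the annihilator `Y⊥`. -/
def pullQ (Y : Submodule ℂ X) [IsClosed (Y : Set X)] :
    ((X ⧸ Y) →L[ℂ] ℂ) →ₗ[ℂ] (X →L[ℂ] ℂ) where
  toFun f := f.comp (mkQCLM Y)
  map_add' := by intro f g; ext x; simp
  map_smul' := by intro c f; ext x; simp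

/-- The restriction map `X* → Y*`. -/
def resMap (Y : Submodule ℂ X) : (X →L[ℂ] ℂ) →ₗ[ℂ] (Y →L[ℂ] ℂ) where
  toFun f := f.comp Y.subtypeL
  map_add' := by intro f g; ext x; simp
  map_smul' := by intro c f; ext x; simp

theorem ann_le_ker_resMap (Y : Submodule ℂ X) : ann Y ≤ LinearMap.ker (resMap Y) := by
  intro f hf
  simp only [LinearMap.mem_ker]
  ext y
  exact hf y y.2

/-- The canonical map `X*/Y⊥ → Y*` induced by restriction. -/
def resQbar (Y : Submodule ℂ X) : ((X →L[ℂ] ℂ) ⧸ ann Y) →ₗ[ℂ] (Y →L[ℂ] ℂ) :=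
  (ann Y).liftQ (resMap Y) (ann_le_ker_resMap Y)

end OSP

namespace OSP

variable {Z : Type} [NormedAddCommGroup Z] [NormedSpace ℂ Z]

theorem oss_zero_s15 (N : OSS Z) (n : ℕ) : N.N n 0 = 0 := by
  have h := N.smul_eq n 0 0
  simpa using h

theorem scNorm_nonneg {m : Type} [Fintype m] [DecidableEq m] (A : Matrix m m ℂ) :
    0 ≤ scNorm A := norm_nonneg _

theorem scNorm_stdBasisMatrix_le {n : ℕ} (i j : Fin n) :
    scNorm (Matrix.single i j (1 : ℂ)) ≤ 1 := by
  apply ContinuousLinearMap.opNorm_le_bound _ zero_le_one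
  intro x
  rw [one_mul]
  have key : Matrix.toEuclideanCLM (𝕜 := ℂ) (Matrix.single i j (1 : ℂ)) x
      = EuclideanSpace.single i (x j) := by
    ext p
    change (WithLp.ofLp (Matrix.toEuclideanCLM (𝕜 := ℂ) (Matrix.single i j (1 : ℂ)) x)) p = _
    rw [Matrix.ofLp_toEuclideanCLM, Matrix.single_mulVec]
    rcases eq_or_ne p i with rfl | hp
    · simp
    · simp [Function.update, hp]
  rw [key, EuclideanSpace.norm_single]
  have h3 : ‖x j‖ ^ 2 ≤ ∑ k, ‖x k‖ ^ 2 :=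
    Finset.single_le_sum (f := fun k => ‖x k‖ ^ 2)
      (fun k _ => sq_nonneg _) (Finset.mem_univ j)
  rw [EuclideanSpace.norm_eq]
  calc ‖x j‖ = Real.sqrt (‖x j‖ ^ 2) := by rw [Real.sqrt_sq (norm_nonneg _)]
    _ ≤ Real.sqrt (∑ k, ‖x k‖ ^ 2) := Real.sqrt_le_sqrt h3

theorem oss_single_le (N : OSS Z) {n : ℕ} (k l : Fin n) (v : Z) :
    N.N n (Matrix.single k l v) ≤ ‖v‖ := by
  have hn : 0 < n := k.pos
  obtain ⟨m, rfl⟩ : ∃ m, n = 1 + m := ⟨n - 1, by omega⟩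
  haveI : NeZero (1 + m) := ⟨by omega⟩
  set y1 : Matrix (Fin 1) (Fin 1) Z := Matrix.of fun _ _ => v with hy1
  set w : Matrix (Fin (1 + m)) (Fin (1 + m)) Z :=
    (Matrix.fromBlocks y1 0 0 (0 : Matrix (Fin m) (Fin m) Z)).submatrix
      finSumFinEquiv.symm finSumFinEquiv.symm with hwdef
  have hw : N.N (1 + m) w = ‖v‖ := by
    rw [hwdef, N.ruan_block 1 m y1 0, N.level_one, oss_zero_s15]
    exact max_eq_left (norm_nonneg v)
  have hzero : finSumFinEquiv (Sum.inl (0 : Fin 1)) = (0 : Fin (1 + m)) := by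
    apply Fin.ext
    simp [finSumFinEquiv]
  have hw0 : ∀ p q : Fin (1 + m), w p q = if p = 0 ∧ q = 0 then v else 0 := by
    intro p q
    rw [hwdef]
    simp only [Matrix.submatrix_apply]
    rcases hp : finSumFinEquiv.symm p with a | a <;>
      rcases hq : finSumFinEquiv.symm q with b | b
    · have hpa : p = 0 := by
        have := congrArg finSumFinEquiv hp
        rw [Equiv.apply_symm_apply] at this
        rw [this, Subsingleton.elim a 0, hzero]
      have hqb : q = 0 := by
        have := congrArg finSumFinEquiv hq
        rw [Equiv.apply_symm_apply] at this
        rw [this, Subsingleton.elim b 0, hzero]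
      simp [hpa, hqb, Matrix.fromBlocks, hy1]
    · have hqb : q ≠ 0 := by
        intro h
        rw [h, (Equiv.symm_apply_eq _).2 hzero.symm] at hq
        exact Sum.inl_ne_inr hq
      simp [hqb, Matrix.fromBlocks]
    · have hpa : p ≠ 0 := by
        intro h
        rw [h, (Equiv.symm_apply_eq _).2 hzero.symm] at hp
        exact Sum.inl_ne_inr hp
      simp [hpa, Matrix.fromBlocks]
    · have hpa : p ≠ 0 := by
        intro h
        rw [h, (Equiv.symm_apply_eq _).2 hzero.symm] at hp
        exact Sum.inl_ne_inr hp
      simp [hpa, Matrix.fromBlocks]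
  have hsm : smulMat (Matrix.single k 0 (1 : ℂ)) w
      (Matrix.single 0 l (1 : ℂ)) = Matrix.single k l v := by
    ext i j
    show (∑ p, ∑ q, (Matrix.single k 0 (1 : ℂ) i p *
        Matrix.single 0 l (1 : ℂ) q j) • w p q) = _
    rw [Finset.sum_eq_single (0 : Fin (1 + m))]
    · rw [Finset.sum_eq_single (0 : Fin (1 + m))]
      · rw [hw0 0 0, if_pos ⟨rfl, rfl⟩]
        simp only [Matrix.single, Matrix.of_apply]
        rcases eq_or_ne k i with rfl | hk
        · rcases eq_or_ne l j with rfl | hl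
          · simp
          · simp [hl]
        · simp [hk]
      · intro q _ hq
        rw [hw0 0 q]
        simp [hq]
      · intro h; exact absurd (Finset.mem_univ _) h
    · intro p _ hp
      apply Finset.sum_eq_zero
      intro q _
      rw [hw0 p q]
      simp [hp]
    · intro h; exact absurd (Finset.mem_univ _) h
  calc N.N (1 + m) (Matrix.single k l v)
      = N.N (1 + m) (smulMat (Matrix.single k 0 (1 : ℂ)) w
          (Matrix.single 0 l (1 : ℂ))) := by rw [hsm]
    _ ≤ scNorm (Matrix.single k 0 (1 : ℂ)) * N.N (1 + m) w *
          scNorm (Matrix.single 0 l (1 : ℂ)) := N.ruan_mul _ _ _ _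
    _ ≤ 1 * N.N (1 + m) w * 1 := by
        have h1 := scNorm_stdBasisMatrix_le k (0 : Fin (1 + m))
        have h2 := scNorm_stdBasisMatrix_le (0 : Fin (1 + m)) l
        have h3 := N.nonneg (1 + m) w
        have h4 := scNorm_nonneg (Matrix.single k (0 : Fin (1 + m)) (1 : ℂ))
        have h5 := scNorm_nonneg (Matrix.single (0 : Fin (1 + m)) l (1 : ℂ))
        have hA := mul_le_mul_of_nonneg_right
          (mul_le_mul_of_nonneg_right h1 h3) h5
        have hB := mul_le_mul_of_nonneg_left h2
          (by nlinarith : (0 : ℝ) ≤ 1 * N.N (1 + m) w)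
        linarith
    _ = ‖v‖ := by rw [hw]; ring

theorem oss_sum_le (N : OSS Z) (n : ℕ) {ι : Type} (s : Finset ι)
    (f : ι → Matrix (Fin n) (Fin n) Z) :
    N.N n (∑ p ∈ s, f p) ≤ ∑ p ∈ s, N.N n (f p) := by
  classical
  induction s using Finset.induction with
  | empty => simp [oss_zero_s15]
  | insert a s h ih =>
    rw [Finset.sum_insert h, Finset.sum_insert h]
    exact (N.add_le _ _ _).trans (by linarith)

theorem oss_le_sum_norm (N : OSS Z) (n : ℕ) (y : Matrix (Fin n) (Fin n) Z) :
    N.N n y ≤ ∑ k : Fin n, ∑ l : Fin n, ‖y k l‖ := by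
  conv_lhs => rw [Matrix.matrix_eq_sum_single y]
  calc N.N n (∑ k : Fin n, ∑ l : Fin n, Matrix.single k l (y k l))
      ≤ ∑ k : Fin n, N.N n (∑ l : Fin n, Matrix.single k l (y k l)) :=
        oss_sum_le N n _ _
    _ ≤ ∑ k : Fin n, ∑ l : Fin n, N.N n (Matrix.single k l (y k l)) :=
        Finset.sum_le_sum fun k _ => oss_sum_le N n _ _
    _ ≤ ∑ k : Fin n, ∑ l : Fin n, ‖y k l‖ :=
        Finset.sum_le_sum fun k _ => Finset.sum_le_sum fun l _ => oss_single_le N k l _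

variable {X : Type} [NormedAddCommGroup X] [NormedSpace ℂ X]

theorem maxN_set_bdd (n : ℕ) (x : Matrix (Fin n) (Fin n) X) :
    ∀ r ∈ {r | ∃ (Z : OpSpace) (u : X →L[ℂ] Z.carrier),
      ‖u‖ ≤ 1 ∧ r = Z.str.N n (x.map ⇑u)},
      r ≤ ∑ k : Fin n, ∑ l : Fin n, ‖x k l‖ := by
  rintro r ⟨Z, u, hu, rfl⟩
  refine (oss_le_sum_norm Z.str n _).trans ?_
  refine Finset.sum_le_sum fun k _ => Finset.sum_le_sum fun l _ => ?_
  calc ‖(x.map ⇑u) k l‖ = ‖u (x k l)‖ := rfl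
    _ ≤ ‖u‖ * ‖x k l‖ := u.le_opNorm _
    _ ≤ 1 * ‖x k l‖ := by
        have := norm_nonneg (x k l); nlinarith
    _ = ‖x k l‖ := one_mul _

end OSP

/-- if `X` is an infinite dimensional operator space all of whose finite
dimensional subspaces (with the inherited matrix norms) are maximal, then `X` is maximal. -/
theorem stmt15 (X : Type) [NormedAddCommGroup X] [NormedSpace ℂ X] (os : OSP.OSS X)
    (hinf : ¬ FiniteDimensional ℂ X)
    (hmax : ∀ E : Submodule ℂ X, FiniteDimensional ℂ E →
      ∀ (n : ℕ) (x : Matrix (Fin n) (Fin n) E),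
        OSP.subN os.N E n x = OSP.maxN E n x) :
    ∀ (n : ℕ) (x : Matrix (Fin n) (Fin n) X), os.N n x = OSP.maxN X n x := by
  intro n x
  apply le_antisymm
  · -- os.N n x ≤ maxN X n x : take Z = (X, os), u = id
    apply le_csSup ⟨_, OSP.maxN_set_bdd n x⟩
    refine ⟨{ carrier := X, str := os }, ContinuousLinearMap.id ℂ X,
      ContinuousLinearMap.norm_id_le, ?_⟩
    rw [show x.map ⇑(ContinuousLinearMap.id ℂ X) = x from by ext i j; rfl]
  · -- maxN X n x ≤ os.N n x
    apply Real.sSup_le _ (os.nonneg n x)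
    rintro r ⟨Z, u, hu, rfl⟩
    set E : Submodule ℂ X :=
      Submodule.span ℂ (Set.range fun p : Fin n × Fin n => x p.1 p.2) with hE
    have hEfin : FiniteDimensional ℂ E :=
      FiniteDimensional.span_of_finite ℂ (Set.finite_range _)
    set x' : Matrix (Fin n) (Fin n) E :=
      Matrix.of fun i j => (⟨x i j, Submodule.subset_span ⟨(i, j), rfl⟩⟩ : E) with hx'
    have hmap : x'.map ⇑E.subtype = x := by ext i j; rfl
    have h1 : OSP.subN os.N E n x' = os.N n x := by
      rw [OSP.subN, hmap]
    have h2 := hmax E hEfin n x'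
    set u' : E →L[ℂ] Z.carrier := u.comp E.subtypeL with hu'def
    have hu' : ‖u'‖ ≤ 1 := by
      apply ContinuousLinearMap.opNorm_le_bound _ zero_le_one
      intro e
      rw [one_mul]
      calc ‖u' e‖ = ‖u (e : X)‖ := rfl
        _ ≤ ‖u‖ * ‖(e : X)‖ := u.le_opNorm _
        _ ≤ 1 * ‖(e : X)‖ := by
            have := norm_nonneg (e : X); nlinarith
        _ = ‖e‖ := one_mul _
    have hmem : Z.str.N n (x.map ⇑u) ∈ {r | ∃ (W : OSP.OpSpace) (v : E →L[ℂ] W.carrier),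
        ‖v‖ ≤ 1 ∧ r = W.str.N n (x'.map ⇑v)} := by
      refine ⟨Z, u', hu', ?_⟩
      rw [show x'.map ⇑u' = x.map ⇑u from by ext i j; rfl]
    calc Z.str.N n (x.map ⇑u) ≤ OSP.maxN E n x' :=
          le_csSup ⟨_, OSP.maxN_set_bdd n x'⟩ hmem
      _ = OSP.subN os.N E n x' := (h2).symm
      _ = os.N n x := h1
end
end
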